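/- Let f : ℝ → ℝ be C¹ and suppose there are constants 0 < m ≤ M with m ≤ f'(y) ≤ M for all y. If p > 0 and p ∉ [m, M], then for every q ∈ ℝ the function φ(y) = q − p·y − f((q − f(y))/p) has nowhere vanishing derivative; in particular, every zero of φ is simple. -/

import Mathlib

/-- If `f` is `C¹` with `m ≤ f' ≤ M` (`0 < m ≤ M`) and `p > 0` with `p ∉ [m, M]`,
then for every `q` the displacement function `φ(y) = q − p·y − f((q − f(y))/p)` has
nowhere vanishing derivative; in particular, every zero of `φ` is simple. -/
theorem displacement_deriv_ne_zero (f : ℝ → ℝ) (hf : ContDiff ℝ 1 f)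
    (m M : ℝ) (hm : 0 < m) (hmM : m ≤ M)
    (hbounds : ∀ y : ℝ, m ≤ deriv f y ∧ deriv f y ≤ M)
    (p : ℝ) (hp : 0 < p) (hpout : p ∉ Set.Icc m M) :
    ∀ q y : ℝ, deriv (fun y => q - p * y - f ((q - f y) / p)) y ≠ 0 := by
  intro q y
  have hdiff : Differentiable ℝ f := hf.differentiable one_ne_zero
  set u := (q - f y) / p with hu
  have h1 : HasDerivAt (fun y : ℝ => (q - f y) / p) (-deriv f y / p) y := by
    simpa [div_eq_mul_inv, neg_mul] using
      (((hdiff y).hasDerivAt.const_sub q).div_const p)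
  have h2 : HasDerivAt (fun y : ℝ => f ((q - f y) / p))
      (deriv f u * (-deriv f y / p)) y := (hdiff u).hasDerivAt.comp y h1
  have h3 : HasDerivAt (fun y : ℝ => q - p * y - f ((q - f y) / p))
      (-p - deriv f u * (-deriv f y / p)) y := by
    have hl : HasDerivAt (fun y : ℝ => q - p * y) (-p) y := by
      simpa using ((hasDerivAt_id y).const_mul p).const_sub q
    exact hl.sub h2
  rw [h3.deriv]
  have hmu := (hbounds u).1
  have hMu := (hbounds u).2
  have hmy := (hbounds y).1
  have hMy := (hbounds y).2
  have hprod : m * m ≤ deriv f u * deriv f y ∧ deriv f u * deriv f y ≤ M * M :=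
    ⟨mul_le_mul hmu hmy hm.le (le_trans hm.le hmu),
     mul_le_mul hMu hMy (le_trans hm.le hmy) (le_trans hm.le (le_trans hmu hMu))⟩
  have hpne : p * p ≠ deriv f u * deriv f y := by
    rcases not_and_or.mp (fun h => hpout ⟨h.1, h.2⟩ : ¬(m ≤ p ∧ p ≤ M)) with h | h
    · push_neg at h
      have : p * p < m * m := mul_lt_mul'' h h hp.le hp.le
      exact ne_of_lt (lt_of_lt_of_le this hprod.1)
    · push_neg at h
      have : M * M < p * p := mul_lt_mul'' h h (le_trans hm.le hmM) (le_trans hm.le hmM)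
      exact ne_of_gt (lt_of_le_of_lt hprod.2 this)
  intro hcon
  apply hpne
  field_simp at hcon
  nlinarith [hcon]
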